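/- Let n ≥ 1, r = ⌊(n+2)/2⌋, β = [[0, yz],[y, 0]] ∈ M₂(F) with v(y) = −n exactly, and ψ_β(x) = ψ(tr(β(x−1))) for x ∈ SL₂^r(ℤ_p). Then the stabilizer {g ∈ SL₂(ℤ_p) : ψ_β(g·x·g^{−1}) = ψ_β(x) for all x ∈ SL₂^r(ℤ_p)} equals the set T·SL₂^{n−r+1}(ℤ_p) = {g_{u,v}·h : (u,v) ∈ ℤ_p², u² − z·v² = 1, h ∈ SL₂^{n−r+1}(ℤ_p)}. -/

import Mathlib

open Matrix

/-- The congruence subgroup `SL₂^r(ℤ_p) = {x ∈ SL₂(ℤ_p) : x - 1 ≡ 0 mod p^r}`, as a set. -/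
def slLevel (p : ℕ) [Fact p.Prime] (r : ℕ) : Set (Matrix.SpecialLinearGroup (Fin 2) ℤ_[p]) :=
  {x | ∀ i j : Fin 2, ((p : ℤ_[p]) ^ r) ∣ (((x : Matrix (Fin 2) (Fin 2) ℤ_[p])) - 1) i j}

/-- The traceless matrix `β = !![0, y·z; y, 0]` attached to the traceless element `β = yα`
of `E = F(α)`, `α² = z`, under the identification `a + bα ↦ !![a, bz; b, a]`. -/
noncomputable def betaMat (p : ℕ) [Fact p.Prime] (y : ℚ_[p]) (z : ℤ_[p]ˣ) : Matrix (Fin 2) (Fin 2) ℚ_[p] :=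
  !![0, y * ((z : ℤ_[p]) : ℚ_[p]); y, 0]

/-- `ψ_β(x) = ψ(tr(β(x-1)))`. -/
noncomputable def psiBeta (p : ℕ) [Fact p.Prime] (ψ : AddChar ℚ_[p] ℂˣ)
    (β : Matrix (Fin 2) (Fin 2) ℚ_[p]) (x : Matrix.SpecialLinearGroup (Fin 2) ℤ_[p]) : ℂˣ :=
  ψ (Matrix.trace (β * ((x : Matrix (Fin 2) (Fin 2) ℤ_[p]).map (fun t => (t : ℚ_[p])) - 1)))

/- ### Auxiliary lemmas -/

section Aux

variable {p : ℕ} [Fact p.Prime]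

lemma psi_forall_iff (ψ : AddChar ℚ_[p] ℂˣ)
    (hψ1 : ∀ t : ℤ_[p], ψ ((p : ℚ_[p]) * (t : ℚ_[p])) = 1)
    (hψ2 : ∃ t : ℤ_[p], ψ ((t : ℚ_[p])) ≠ 1) (w : ℚ_[p]) :
    (∀ t : ℤ_[p], ψ (w * (t : ℚ_[p])) = 1) ↔ ‖w‖ ≤ (p : ℝ)⁻¹ := by
  have hp0 : (0:ℝ) < p := by exact_mod_cast (Fact.out : p.Prime).pos
  have hpne : (p:ℚ_[p]) ≠ 0 := by
    exact_mod_cast (Nat.cast_ne_zero (R := ℚ_[p])).2 (Fact.out : p.Prime).ne_zero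
  constructor
  · intro h
    by_contra hgt
    push_neg at hgt
    have hw0 : w ≠ 0 := by
      rintro rfl
      simp only [norm_zero] at hgt
      exact absurd hgt (not_lt.2 (by positivity))
    have hge1 : (1:ℝ) ≤ ‖w‖ := by
      have := (Padic.norm_le_pow_iff_norm_lt_pow_add_one w (-1)).not.1 ?_
      · push_neg at this
        simpa using this
      · intro hle
        refine absurd hle (not_le.2 ?_)
        simpa [_root_.zpow_neg_one] using hgt
    obtain ⟨t₀, ht₀⟩ := hψ2
    have hnorm : ‖(t₀ : ℚ_[p]) / w‖ ≤ 1 := by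
      rw [norm_div]
      calc ‖(t₀ : ℚ_[p])‖ / ‖w‖ ≤ 1 / 1 := by
            apply div_le_div₀ (by norm_num) t₀.2 (by norm_num) hge1
        _ = 1 := by norm_num
    refine ht₀ ?_
    have := h ⟨(t₀ : ℚ_[p]) / w, hnorm⟩
    rwa [show w * ((⟨(t₀ : ℚ_[p]) / w, hnorm⟩ : ℤ_[p]) : ℚ_[p]) = (t₀:ℚ_[p]) by
      show w * ((t₀ : ℚ_[p]) / w) = _
      field_simp] at this
  · intro hle t
    have hs : ‖w / (p:ℚ_[p])‖ ≤ 1 := by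
      rw [norm_div, Padic.norm_p, div_le_one (by positivity)]
      exact hle
    set s : ℤ_[p] := ⟨w / p, hs⟩ with hsdef
    have : w * (t : ℚ_[p]) = (p : ℚ_[p]) * ((s * t : ℤ_[p]) : ℚ_[p]) := by
      rw [PadicInt.coe_mul]; show w * (t:ℚ_[p]) = (p:ℚ_[p]) * (w / p * t)
      push_cast
      field_simp
    rw [this]
    exact hψ1 _

lemma two_unit (hp : p ≠ 2) : IsUnit (2 : ℤ_[p]) := by
  by_contra h
  rw [PadicInt.not_isUnit_iff, PadicInt.norm_lt_one_iff_dvd] at h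
  have h2 : (p : ℤ) ∣ 2 := by
    refine (PadicInt.norm_int_lt_one_iff_dvd 2).1 ?_
    rw [show ((2:ℤ) : ℤ_[p]) = (2 : ℤ_[p]) by norm_cast, PadicInt.norm_lt_one_iff_dvd]
    exact h
  have hle : (p : ℤ) ≤ 2 := Int.le_of_dvd (by norm_num) h2
  have hge : 2 ≤ p := (Fact.out : p.Prime).two_le
  omega

lemma unit_of_not_dvd {x : ℤ_[p]} (h : ¬ (p : ℤ_[p]) ∣ x) : IsUnit x := by
  by_contra hx
  rw [PadicInt.not_isUnit_iff, PadicInt.norm_lt_one_iff_dvd] at hx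
  exact h hx

/-- square roots of `1 + p^k s`, `p` odd, with precision `p^k`. -/
lemma sqrt_lemma (hp : p ≠ 2) (s : ℤ_[p]) (k : ℕ) (hk : 1 ≤ k) :
    ∃ v w : ℤ_[p], v * v = 1 + (p:ℤ_[p])^k * s ∧ v = 1 + (p:ℤ_[p])^k * w := by
  have hp0 : (0:ℝ) < p := by exact_mod_cast (Fact.out : p.Prime).pos
  have hp1 : (1:ℝ) < p := by exact_mod_cast (Fact.out : p.Prime).one_lt
  set c0 : ℤ_[p] := 1 + (p:ℤ_[p])^k * s with hc0
  set F : Polynomial ℤ_[p] := Polynomial.X^2 - Polynomial.C c0 with hF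
  have hFeval : ∀ x : ℤ_[p], F.eval x = x^2 - c0 := by intro x; simp [hF]
  have hFd : ∀ x : ℤ_[p], (Polynomial.derivative F).eval x = 2 * x := by
    intro x; simp [hF]; norm_num
  have h2 : ‖(2:ℤ_[p])‖ = 1 := PadicInt.isUnit_iff.1 (two_unit hp)
  have hnorm : ‖F.eval 1‖ < ‖(Polynomial.derivative F).eval 1‖^2 := by
    rw [hFeval, hFd]
    have e1 : (1:ℤ_[p])^2 - c0 = -((p:ℤ_[p])^k * s) := by rw [hc0]; ring
    rw [e1, norm_neg, mul_one, h2, one_pow]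
    calc ‖(p:ℤ_[p])^k * s‖ = ‖(p:ℤ_[p])^k‖ * ‖s‖ := norm_mul _ _
      _ ≤ ‖(p:ℤ_[p])^k‖ * 1 :=
          mul_le_mul_of_nonneg_left (PadicInt.norm_le_one s) (norm_nonneg _)
      _ = ((p:ℝ))⁻¹^k := by rw [mul_one, norm_pow, PadicInt.norm_p]
      _ < 1 := by
          apply pow_lt_one₀ (by positivity) _ (by omega)
          rw [inv_lt_one_iff₀]; right; exact hp1
  obtain ⟨v, hroot, hclose, -, -⟩ := hensels_lemma hnorm
  have hv2 : v * v = 1 + (p:ℤ_[p])^k * s := by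
    have h' : v^2 - c0 = 0 := by rw [← hFeval v, ← Polynomial.coe_aeval_eq_eval, hroot]
    rw [hc0] at h'; linear_combination h'
  have hdvd : (p:ℤ_[p]) ∣ (v - 1) := by
    rw [← PadicInt.norm_lt_one_iff_dvd]
    calc ‖v - 1‖ < ‖(Polynomial.derivative F).eval 1‖ := hclose
      _ = 1 := by rw [hFd, mul_one, h2]
  have hunit : IsUnit (v + 1) := by
    apply unit_of_not_dvd
    intro hdvd2
    have h2dvd : (p:ℤ_[p]) ∣ 2 := by
      have : (v + 1) - (v - 1) = 2 := by ring
      exact this ▸ dvd_sub hdvd2 hdvd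
    have : IsUnit (p:ℤ_[p]) := isUnit_of_dvd_unit h2dvd (two_unit hp)
    rw [PadicInt.isUnit_iff, PadicInt.norm_p] at this
    have : (p:ℝ)⁻¹ < 1 := by rw [inv_lt_one_iff₀]; right; exact hp1
    linarith [this]
  obtain ⟨i, hi⟩ := hunit.exists_right_inv
  refine ⟨v, s * i, hv2, ?_⟩
  linear_combination i * hv2 - (v - 1) * hi

/-- the correction term. -/
noncomputable def Kterm (z : ℤ_[p]ˣ) (g x : Matrix.SpecialLinearGroup (Fin 2) ℤ_[p]) : ℤ_[p] :=
  ((g : Matrix (Fin 2) (Fin 2) ℤ_[p]) 0 0 ^ 2 - (z:ℤ_[p]) * (g : Matrix (Fin 2) (Fin 2) ℤ_[p]) 1 0 ^ 2 - 1)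
      * (x : Matrix (Fin 2) (Fin 2) ℤ_[p]) 0 1
    + ((z:ℤ_[p]) * (g : Matrix (Fin 2) (Fin 2) ℤ_[p]) 1 1 ^ 2 - (g : Matrix (Fin 2) (Fin 2) ℤ_[p]) 0 1 ^ 2 - (z:ℤ_[p]))
      * (x : Matrix (Fin 2) (Fin 2) ℤ_[p]) 1 0
    - ((g : Matrix (Fin 2) (Fin 2) ℤ_[p]) 0 0 * (g : Matrix (Fin 2) (Fin 2) ℤ_[p]) 0 1
        - (z:ℤ_[p]) * (g : Matrix (Fin 2) (Fin 2) ℤ_[p]) 1 0 * (g : Matrix (Fin 2) (Fin 2) ℤ_[p]) 1 1)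
      * ((x : Matrix (Fin 2) (Fin 2) ℤ_[p]) 0 0 - (x : Matrix (Fin 2) (Fin 2) ℤ_[p]) 1 1)

lemma psi_conj (ψ : AddChar ℚ_[p] ℂˣ) (y : ℚ_[p]) (z : ℤ_[p]ˣ)
    (g x : Matrix.SpecialLinearGroup (Fin 2) ℤ_[p]) :
    psiBeta p ψ (betaMat p y z) (g * x * g⁻¹)
      = psiBeta p ψ (betaMat p y z) x * ψ (y * (Kterm z g x : ℚ_[p])) := by
  rw [psiBeta, psiBeta, ← AddChar.map_add_eq_mul]
  congr 1
  have hcoe : ((g * x * g⁻¹ : Matrix.SpecialLinearGroup (Fin 2) ℤ_[p]) : Matrix (Fin 2) (Fin 2) ℤ_[p])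
      = (g : Matrix (Fin 2) (Fin 2) ℤ_[p]) * (x : Matrix (Fin 2) (Fin 2) ℤ_[p])
        * adjugate (g : Matrix (Fin 2) (Fin 2) ℤ_[p]) := by
    simp [Matrix.SpecialLinearGroup.coe_inv]
  rw [hcoe, Matrix.adjugate_fin_two]
  simp only [Matrix.trace_fin_two, Matrix.sub_apply, Matrix.mul_apply, Matrix.map_apply,
    Matrix.one_apply, Fin.sum_univ_two, betaMat, Kterm, Matrix.of_apply,
    Matrix.cons_val', Matrix.cons_val_zero, Matrix.cons_val_one, Matrix.head_cons,
    Matrix.head_fin_const, Matrix.empty_val', Matrix.cons_val_fin_one]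
  push_cast
  ring

lemma lift_lemma (hp : p ≠ 2) (z : ℤ_[p]ˣ) (m : ℕ) (hm : 1 ≤ m)
    (g : Matrix.SpecialLinearGroup (Fin 2) ℤ_[p])
    (hda : (p:ℤ_[p])^m ∣ ((g : Matrix (Fin 2) (Fin 2) ℤ_[p]) 0 0 - (g : Matrix (Fin 2) (Fin 2) ℤ_[p]) 1 1))
    (hbzc : (p:ℤ_[p])^m ∣ ((g : Matrix (Fin 2) (Fin 2) ℤ_[p]) 0 1 - (z:ℤ_[p]) * (g : Matrix (Fin 2) (Fin 2) ℤ_[p]) 1 0)) :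
    ∃ (u v : ℤ_[p]) (h : Matrix.SpecialLinearGroup (Fin 2) ℤ_[p]),
      u ^ 2 - (z : ℤ_[p]) * v ^ 2 = 1 ∧ h ∈ slLevel p m ∧
      (g : Matrix (Fin 2) (Fin 2) ℤ_[p])
        = !![u, v * (z : ℤ_[p]); v, u] * (h : Matrix (Fin 2) (Fin 2) ℤ_[p]) := by
  obtain ⟨a, ha⟩ : ∃ t, (g : Matrix (Fin 2) (Fin 2) ℤ_[p]) 0 0 = t := ⟨_, rfl⟩
  obtain ⟨b, hb⟩ : ∃ t, (g : Matrix (Fin 2) (Fin 2) ℤ_[p]) 0 1 = t := ⟨_, rfl⟩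
  obtain ⟨c, hc⟩ : ∃ t, (g : Matrix (Fin 2) (Fin 2) ℤ_[p]) 1 0 = t := ⟨_, rfl⟩
  obtain ⟨d, hd⟩ : ∃ t, (g : Matrix (Fin 2) (Fin 2) ℤ_[p]) 1 1 = t := ⟨_, rfl⟩
  rw [ha, hd] at hda
  rw [hb, hc] at hbzc
  have hdet : a * d - b * c = 1 := by
    have := g.prop
    rw [Matrix.det_fin_two, ha, hb, hc, hd] at this
    exact this
  have hpnu : ¬ IsUnit (p : ℤ_[p]) := by
    rw [PadicInt.isUnit_iff, PadicInt.norm_p]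
    have hp1 : (1:ℝ) < p := by exact_mod_cast (Fact.out : p.Prime).one_lt
    intro hcon
    rw [inv_eq_one] at hcon
    linarith
  obtain ⟨e, he⟩ : (p:ℤ_[p])^m ∣ (a^2 - (z:ℤ_[p])*c^2 - 1) := by
    have hid : a^2 - (z:ℤ_[p])*c^2 - 1 = a*(a-d) + c*(b - (z:ℤ_[p])*c) := by
      linear_combination hdet
    rw [hid]
    exact dvd_add (hda.mul_left a) (hbzc.mul_left c)
  have main : ∃ u v : ℤ_[p], u^2 - (z:ℤ_[p])*v^2 = 1 ∧ (p:ℤ_[p])^m ∣ (a - u) ∧ (p:ℤ_[p])^m ∣ (c - v) := by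
    by_cases hdvda : (p:ℤ_[p]) ∣ a
    · have hcu : IsUnit c := by
        apply unit_of_not_dvd
        intro hdvdc
        refine hpnu (isUnit_of_dvd_one ?_)
        have h1 : (1:ℤ_[p]) = a*a - (z:ℤ_[p])*c*c - (p:ℤ_[p])^m * e := by
          linear_combination -he
        rw [h1]
        refine dvd_sub (dvd_sub (hdvda.mul_left a) ((hdvdc.mul_left ((z:ℤ_[p])*c)))) ?_
        exact dvd_mul_of_dvd_left (dvd_pow_self _ (by omega)) e
      obtain ⟨i, hi⟩ := hcu.exists_right_inv
      have hz1 : (z:ℤ_[p]) * ((z⁻¹:ℤ_[p]ˣ):ℤ_[p]) = 1 := by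
        rw [← Units.val_mul, mul_inv_cancel, Units.val_one]
      set zi : ℤ_[p] := ((z⁻¹:ℤ_[p]ˣ):ℤ_[p]) with hzi
      obtain ⟨v0, w0, hv0, hvw0⟩ := sqrt_lemma hp (e*i*i*zi) m hm
      refine ⟨a, c * v0, ?_, ⟨0, by ring⟩, ⟨-(c*w0), by linear_combination (-c) * hvw0⟩⟩
      linear_combination he + (-((z:ℤ_[p])*c^2)) * hv0
        + (-((p:ℤ_[p])^m * e * zi * (z:ℤ_[p]) * (c*i+1))) * hi + (-((p:ℤ_[p])^m * e)) * hz1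
    · have hau : IsUnit a := unit_of_not_dvd hdvda
      obtain ⟨i, hi⟩ := hau.exists_right_inv
      obtain ⟨v0, w0, hv0, hvw0⟩ := sqrt_lemma hp (-(e*i*i)) m hm
      refine ⟨a * v0, c, ?_, ⟨-(a*w0), by linear_combination (-a) * hvw0⟩, ⟨0, by ring⟩⟩
      linear_combination a^2 * hv0 + he + (-((p:ℤ_[p])^m * e * (a*i + 1))) * hi
  obtain ⟨u, v, huv, hau2, hcv2⟩ := main
  have hud : (p:ℤ_[p])^m ∣ (u - d) := by
    have : u - d = -(a - u) + (a - d) := by ring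
    rw [this]; exact dvd_add (dvd_neg.2 hau2) hda
  have hbzv : (p:ℤ_[p])^m ∣ (b - (z:ℤ_[p])*v) := by
    have : b - (z:ℤ_[p])*v = (b - (z:ℤ_[p])*c) + (z:ℤ_[p])*(c - v) := by ring
    rw [this]; exact dvd_add hbzc (hcv2.mul_left _)
  set Hm : Matrix (Fin 2) (Fin 2) ℤ_[p] := !![u, -(v*(z:ℤ_[p])); -v, u] * (g : Matrix (Fin 2) (Fin 2) ℤ_[p]) with hHm
  have hHdet : Hm.det = 1 := by
    rw [hHm, Matrix.det_mul, g.prop, mul_one, Matrix.det_fin_two_of]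
    linear_combination huv
  set h : Matrix.SpecialLinearGroup (Fin 2) ℤ_[p] := ⟨Hm, hHdet⟩ with hh
  have hcoeh : (h : Matrix (Fin 2) (Fin 2) ℤ_[p]) = Hm := rfl
  have H00 : Hm 0 0 = u * a - v * (z:ℤ_[p]) * c := by
    rw [hHm]; simp [Matrix.mul_apply, Fin.sum_univ_two, ha, hc]; ring
  have H01 : Hm 0 1 = u * b - v * (z:ℤ_[p]) * d := by
    rw [hHm]; simp [Matrix.mul_apply, Fin.sum_univ_two, hb, hd]; ring
  have H10 : Hm 1 0 = u * c - v * a := by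
    rw [hHm]; simp [Matrix.mul_apply, Fin.sum_univ_two, ha, hc]; ring
  have H11 : Hm 1 1 = u * d - v * b := by
    rw [hHm]; simp [Matrix.mul_apply, Fin.sum_univ_two, hb, hd]; ring
  refine ⟨u, v, h, huv, ?_, ?_⟩
  · intro i j
    fin_cases i <;> fin_cases j <;>
      simp only [hcoeh, Matrix.sub_apply, Matrix.one_apply_eq, Fin.zero_eta, Fin.mk_one,
        Matrix.one_apply_ne (by decide : (0:Fin 2) ≠ 1),
        Matrix.one_apply_ne (by decide : (1:Fin 2) ≠ 0), sub_zero]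
    · rw [H00]
      have : u * a - v * (z:ℤ_[p]) * c - 1
          = u * (a - u) - (z:ℤ_[p]) * v * (c - v) + (u^2 - (z:ℤ_[p])*v^2 - 1) := by ring
      rw [this, huv]
      simpa using dvd_sub (hau2.mul_left u) (hcv2.mul_left ((z:ℤ_[p])*v))
    · rw [H01]
      have : u * b - v * (z:ℤ_[p]) * d
          = u * (b - (z:ℤ_[p])*v) + (z:ℤ_[p]) * v * (u - d) := by ring
      rw [this]
      exact dvd_add (hbzv.mul_left u) (hud.mul_left _)
    · rw [H10]
      have : u * c - v * a = u * (c - v) - v * (a - u) := by ring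
      rw [this]
      exact dvd_sub (hcv2.mul_left u) (hau2.mul_left v)
    · rw [H11]
      have : u * d - v * b - 1
          = u * (d - u) - v * (b - (z:ℤ_[p])*v) + (u^2 - (z:ℤ_[p])*v^2 - 1) := by ring
      rw [this, huv]
      have hdu : (p:ℤ_[p])^m ∣ (d - u) := by
        rw [show d - u = -(u - d) by ring]; exact dvd_neg.2 hud
      simpa using dvd_sub (hdu.mul_left u) (hbzv.mul_left v)
  · rw [hcoeh, hHm, ← Matrix.mul_assoc]
    have hone : !![u, v * (z:ℤ_[p]); v, u] * !![u, -(v*(z:ℤ_[p])); -v, u] = 1 := by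
      have hprod : !![u, v * (z:ℤ_[p]); v, u] * !![u, -(v*(z:ℤ_[p])); -v, u]
          = !![u^2 - (z:ℤ_[p])*v^2, 0; 0, u^2 - (z:ℤ_[p])*v^2] := by
        ext i j
        fin_cases i <;> fin_cases j <;> simp [Matrix.mul_apply, Fin.sum_univ_two] <;> ring
      rw [hprod, huv, ← Matrix.one_fin_two]
    rw [hone, Matrix.one_mul]

lemma back_lemma (z : ℤ_[p]ˣ) (m : ℕ)
    (g : Matrix.SpecialLinearGroup (Fin 2) ℤ_[p])
    (hex : ∃ (u v : ℤ_[p]) (h : Matrix.SpecialLinearGroup (Fin 2) ℤ_[p]),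
      u ^ 2 - (z : ℤ_[p]) * v ^ 2 = 1 ∧ h ∈ slLevel p m ∧
      (g : Matrix (Fin 2) (Fin 2) ℤ_[p])
        = !![u, v * (z : ℤ_[p]); v, u] * (h : Matrix (Fin 2) (Fin 2) ℤ_[p])) :
    ((p:ℤ_[p])^m ∣ ((g : Matrix (Fin 2) (Fin 2) ℤ_[p]) 0 0 - (g : Matrix (Fin 2) (Fin 2) ℤ_[p]) 1 1))
    ∧ ((p:ℤ_[p])^m ∣ ((g : Matrix (Fin 2) (Fin 2) ℤ_[p]) 0 1 - (z:ℤ_[p]) * (g : Matrix (Fin 2) (Fin 2) ℤ_[p]) 1 0)) := by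
  obtain ⟨u, v, h, huv, hmem, heq⟩ := hex
  have h00 := hmem 0 0
  have h01 := hmem 0 1
  have h10 := hmem 1 0
  have h11 := hmem 1 1
  simp only [Matrix.sub_apply, Matrix.one_apply_eq, Matrix.one_apply_ne (by decide : (0:Fin 2) ≠ 1),
    Matrix.one_apply_ne (by decide : (1:Fin 2) ≠ 0), sub_zero] at h00 h01 h10 h11
  have e00 : (g : Matrix (Fin 2) (Fin 2) ℤ_[p]) 0 0
      = u * (h : Matrix (Fin 2) (Fin 2) ℤ_[p]) 0 0 + v * (z:ℤ_[p]) * (h : Matrix (Fin 2) (Fin 2) ℤ_[p]) 1 0 := by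
    rw [heq]; simp [Matrix.mul_apply, Fin.sum_univ_two]
  have e01 : (g : Matrix (Fin 2) (Fin 2) ℤ_[p]) 0 1
      = u * (h : Matrix (Fin 2) (Fin 2) ℤ_[p]) 0 1 + v * (z:ℤ_[p]) * (h : Matrix (Fin 2) (Fin 2) ℤ_[p]) 1 1 := by
    rw [heq]; simp [Matrix.mul_apply, Fin.sum_univ_two]
  have e10 : (g : Matrix (Fin 2) (Fin 2) ℤ_[p]) 1 0
      = v * (h : Matrix (Fin 2) (Fin 2) ℤ_[p]) 0 0 + u * (h : Matrix (Fin 2) (Fin 2) ℤ_[p]) 1 0 := by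
    rw [heq]; simp [Matrix.mul_apply, Fin.sum_univ_two]
  have e11 : (g : Matrix (Fin 2) (Fin 2) ℤ_[p]) 1 1
      = v * (h : Matrix (Fin 2) (Fin 2) ℤ_[p]) 0 1 + u * (h : Matrix (Fin 2) (Fin 2) ℤ_[p]) 1 1 := by
    rw [heq]; simp [Matrix.mul_apply, Fin.sum_univ_two]
  constructor
  · rw [e00, e11]
    have : u * (h : Matrix (Fin 2) (Fin 2) ℤ_[p]) 0 0 + v * (z:ℤ_[p]) * (h : Matrix (Fin 2) (Fin 2) ℤ_[p]) 1 0
        - (v * (h : Matrix (Fin 2) (Fin 2) ℤ_[p]) 0 1 + u * (h : Matrix (Fin 2) (Fin 2) ℤ_[p]) 1 1)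
        = u * (((h : Matrix (Fin 2) (Fin 2) ℤ_[p]) 0 0 - 1) - ((h : Matrix (Fin 2) (Fin 2) ℤ_[p]) 1 1 - 1))
          + v * (z:ℤ_[p]) * (h : Matrix (Fin 2) (Fin 2) ℤ_[p]) 1 0
          - v * (h : Matrix (Fin 2) (Fin 2) ℤ_[p]) 0 1 := by ring
    rw [this]
    exact dvd_sub (dvd_add ((dvd_sub h00 h11).mul_left u) (h10.mul_left _)) (h01.mul_left v)
  · rw [e01, e10]
    have : u * (h : Matrix (Fin 2) (Fin 2) ℤ_[p]) 0 1 + v * (z:ℤ_[p]) * (h : Matrix (Fin 2) (Fin 2) ℤ_[p]) 1 1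
        - (z:ℤ_[p]) * (v * (h : Matrix (Fin 2) (Fin 2) ℤ_[p]) 0 0 + u * (h : Matrix (Fin 2) (Fin 2) ℤ_[p]) 1 0)
        = u * (h : Matrix (Fin 2) (Fin 2) ℤ_[p]) 0 1 - (z:ℤ_[p]) * u * (h : Matrix (Fin 2) (Fin 2) ℤ_[p]) 1 0
          + v * (z:ℤ_[p]) * (((h : Matrix (Fin 2) (Fin 2) ℤ_[p]) 1 1 - 1) - ((h : Matrix (Fin 2) (Fin 2) ℤ_[p]) 0 0 - 1)) := by ring
    rw [this]
    exact dvd_add (dvd_sub (h01.mul_left u) (h10.mul_left _)) ((dvd_sub h11 h00).mul_left _)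

/-- cong → invariance condition -/
lemma cond_of_cong (ψ : AddChar ℚ_[p] ℂˣ)
    (hψ1 : ∀ t : ℤ_[p], ψ ((p : ℚ_[p]) * (t : ℚ_[p])) = 1)
    (z : ℤ_[p]ˣ) (g : Matrix.SpecialLinearGroup (Fin 2) ℤ_[p]) (n r m : ℕ)
    (hrm : r + m = n + 1) (y : ℚ_[p]) (hY : ‖y * (p:ℚ_[p])^n‖ ≤ 1)
    (hda : (p:ℤ_[p])^m ∣ ((g : Matrix (Fin 2) (Fin 2) ℤ_[p]) 0 0 - (g : Matrix (Fin 2) (Fin 2) ℤ_[p]) 1 1))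
    (hbzc : (p:ℤ_[p])^m ∣ ((g : Matrix (Fin 2) (Fin 2) ℤ_[p]) 0 1 - (z:ℤ_[p]) * (g : Matrix (Fin 2) (Fin 2) ℤ_[p]) 1 0)) :
    ∀ x ∈ slLevel p r,
      psiBeta p ψ (betaMat p y z) (g * x * g⁻¹) = psiBeta p ψ (betaMat p y z) x := by
  have hdet : (g : Matrix (Fin 2) (Fin 2) ℤ_[p]) 0 0 * (g : Matrix (Fin 2) (Fin 2) ℤ_[p]) 1 1
      - (g : Matrix (Fin 2) (Fin 2) ℤ_[p]) 0 1 * (g : Matrix (Fin 2) (Fin 2) ℤ_[p]) 1 0 = 1 := by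
    have := g.prop; rwa [Matrix.det_fin_two] at this
  set a := (g : Matrix (Fin 2) (Fin 2) ℤ_[p]) 0 0 with ha
  set b := (g : Matrix (Fin 2) (Fin 2) ℤ_[p]) 0 1 with hb
  set c := (g : Matrix (Fin 2) (Fin 2) ℤ_[p]) 1 0 with hc
  set d := (g : Matrix (Fin 2) (Fin 2) ℤ_[p]) 1 1 with hd
  have hE1 : (p:ℤ_[p])^m ∣ (a^2 - (z:ℤ_[p])*c^2 - 1) := by
    have hid : a^2 - (z:ℤ_[p])*c^2 - 1 = a*(a-d) + c*(b - (z:ℤ_[p])*c) := by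
      linear_combination hdet
    rw [hid]; exact dvd_add (hda.mul_left a) (hbzc.mul_left c)
  have hE2 : (p:ℤ_[p])^m ∣ ((z:ℤ_[p])*d^2 - b^2 - (z:ℤ_[p])) := by
    have hid : (z:ℤ_[p])*d^2 - b^2 - (z:ℤ_[p])
        = -((z:ℤ_[p])*d)*(a-d) - b*(b - (z:ℤ_[p])*c) := by
      linear_combination (z:ℤ_[p]) * hdet
    rw [hid]
    exact dvd_sub (hda.mul_left _) (hbzc.mul_left b)
  have hE3 : (p:ℤ_[p])^m ∣ (a*b - (z:ℤ_[p])*c*d) := by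
    have hid : a*b - (z:ℤ_[p])*c*d = a*(b - (z:ℤ_[p])*c) + (z:ℤ_[p])*c*(a-d) := by ring
    rw [hid]; exact dvd_add (hbzc.mul_left a) (hda.mul_left _)
  intro x hx
  rw [psi_conj ψ y z g x]
  suffices hone : ψ (y * ((Kterm z g x : ℤ_[p]) : ℚ_[p])) = 1 by rw [hone, mul_one]
  have hx01 : (p:ℤ_[p])^r ∣ (x : Matrix (Fin 2) (Fin 2) ℤ_[p]) 0 1 := by
    have := hx 0 1
    simpa [Matrix.sub_apply, Matrix.one_apply] using this
  have hx10 : (p:ℤ_[p])^r ∣ (x : Matrix (Fin 2) (Fin 2) ℤ_[p]) 1 0 := by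
    have := hx 1 0
    simpa [Matrix.sub_apply, Matrix.one_apply] using this
  have hx00 : (p:ℤ_[p])^r ∣ ((x : Matrix (Fin 2) (Fin 2) ℤ_[p]) 0 0 - 1) := by
    have := hx 0 0
    simpa [Matrix.sub_apply, Matrix.one_apply] using this
  have hx11 : (p:ℤ_[p])^r ∣ ((x : Matrix (Fin 2) (Fin 2) ℤ_[p]) 1 1 - 1) := by
    have := hx 1 1
    simpa [Matrix.sub_apply, Matrix.one_apply] using this
  have hKdvd : (p:ℤ_[p])^(n+1) ∣ Kterm z g x := by
    have hsplit : Kterm z g x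
        = (a^2 - (z:ℤ_[p])*c^2 - 1) * (x : Matrix (Fin 2) (Fin 2) ℤ_[p]) 0 1
          + ((z:ℤ_[p])*d^2 - b^2 - (z:ℤ_[p])) * (x : Matrix (Fin 2) (Fin 2) ℤ_[p]) 1 0
          - (a*b - (z:ℤ_[p])*c*d)
            * (((x : Matrix (Fin 2) (Fin 2) ℤ_[p]) 0 0 - 1) - ((x : Matrix (Fin 2) (Fin 2) ℤ_[p]) 1 1 - 1)) := by
      rw [Kterm]; ring
    have hpow : (p:ℤ_[p])^(n+1) = (p:ℤ_[p])^m * (p:ℤ_[p])^r := by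
      rw [← pow_add]; congr 1; omega
    rw [hsplit, hpow]
    exact dvd_sub (dvd_add (mul_dvd_mul hE1 hx01) (mul_dvd_mul hE2 hx10))
      (mul_dvd_mul hE3 (dvd_sub hx00 hx11))
  obtain ⟨s, hs⟩ := hKdvd
  set Y : ℤ_[p] := ⟨y * (p:ℚ_[p])^n, hY⟩ with hYdef
  have hYcoe : (Y : ℚ_[p]) = y * (p:ℚ_[p])^n := rfl
  have hval : y * ((Kterm z g x : ℤ_[p]) : ℚ_[p]) = (p:ℚ_[p]) * ((Y * s : ℤ_[p]) : ℚ_[p]) := by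
    rw [hs]
    push_cast [hYcoe]
    ring
  rw [hval]
  exact hψ1 _

/-- invariance condition → cong -/
lemma cong_of_cond (hp : p ≠ 2) (ψ : AddChar ℚ_[p] ℂˣ)
    (hψ1 : ∀ t : ℤ_[p], ψ ((p : ℚ_[p]) * (t : ℚ_[p])) = 1)
    (hψ2 : ∃ t : ℤ_[p], ψ ((t : ℚ_[p])) ≠ 1)
    (z : ℤ_[p]ˣ) (g : Matrix.SpecialLinearGroup (Fin 2) ℤ_[p]) (n r m : ℕ)
    (hr1 : 1 ≤ r) (hrle : r ≤ n) (hrm : r + m = n + 1)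
    (y : ℚ_[p]) (hy : y ≠ 0) (hynorm : ‖y‖ = (p:ℝ)^(n:ℤ))
    (hcond : ∀ x ∈ slLevel p r,
      psiBeta p ψ (betaMat p y z) (g * x * g⁻¹) = psiBeta p ψ (betaMat p y z) x) :
    ((p:ℤ_[p])^m ∣ ((g : Matrix (Fin 2) (Fin 2) ℤ_[p]) 0 0 - (g : Matrix (Fin 2) (Fin 2) ℤ_[p]) 1 1))
    ∧ ((p:ℤ_[p])^m ∣ ((g : Matrix (Fin 2) (Fin 2) ℤ_[p]) 0 1 - (z:ℤ_[p]) * (g : Matrix (Fin 2) (Fin 2) ℤ_[p]) 1 0)) := by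
  have hp0R : (0:ℝ) < p := by exact_mod_cast (Fact.out : p.Prime).pos
  have hpneR : ((p:ℝ)) ≠ 0 := ne_of_gt hp0R
  -- norm bound to divisibility
  have dvd_of_norm : ∀ e : ℤ_[p],
      ‖y * (e : ℚ_[p]) * (p:ℚ_[p])^r‖ ≤ (p:ℝ)⁻¹ → (p:ℤ_[p])^m ∣ e := by
    intro e he
    have hnorm_eq : ‖y * (e : ℚ_[p]) * (p:ℚ_[p])^r‖ = ‖e‖ * ((p:ℝ)^(n:ℤ) * (p:ℝ)^(-(r:ℤ))) := by
      rw [norm_mul, norm_mul, hynorm, ← PadicInt.norm_def, Padic.norm_p_pow]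
      ring
    rw [hnorm_eq] at he
    have hpos : (0:ℝ) < (p:ℝ)^(n:ℤ) * (p:ℝ)^(-(r:ℤ)) := by positivity
    have hle2 : ‖e‖ ≤ (p:ℝ)⁻¹ / ((p:ℝ)^(n:ℤ) * (p:ℝ)^(-(r:ℤ))) := (le_div_iff₀ hpos).2 he
    have hrw : (p:ℝ)⁻¹ / ((p:ℝ)^(n:ℤ) * (p:ℝ)^(-(r:ℤ))) = (p:ℝ)^(-(m:ℤ)) := by
      have h1 : ((p:ℝ))^(n:ℤ) * (p:ℝ)^(-(r:ℤ)) = (p:ℝ)^((n:ℤ) - r) := by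
        rw [← zpow_add₀ hpneR]; try congr 1; try ring
      rw [h1, show ((p:ℝ))⁻¹ = (p:ℝ)^(-1:ℤ) from (_root_.zpow_neg_one (p:ℝ)).symm,
        ← zpow_sub₀ hpneR]
      try congr 1
      try omega
    rw [hrw] at hle2
    rw [← Ideal.mem_span_singleton]
    exact (PadicInt.norm_le_pow_iff_mem_span_pow e m).1 hle2
  -- extract character identities
  have ψK : ∀ x ∈ slLevel p r, ψ (y * ((Kterm z g x : ℤ_[p]) : ℚ_[p])) = 1 := by
    intro x hx
    have hpc := psi_conj ψ y z g x
    rw [hcond x hx] at hpc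
    exact (left_eq_mul.1 hpc)
  have hdet : (g : Matrix (Fin 2) (Fin 2) ℤ_[p]) 0 0 * (g : Matrix (Fin 2) (Fin 2) ℤ_[p]) 1 1
      - (g : Matrix (Fin 2) (Fin 2) ℤ_[p]) 0 1 * (g : Matrix (Fin 2) (Fin 2) ℤ_[p]) 1 0 = 1 := by
    have := g.prop; rwa [Matrix.det_fin_two] at this
  set a := (g : Matrix (Fin 2) (Fin 2) ℤ_[p]) 0 0 with ha
  set b := (g : Matrix (Fin 2) (Fin 2) ℤ_[p]) 0 1 with hb
  set c := (g : Matrix (Fin 2) (Fin 2) ℤ_[p]) 1 0 with hc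
  set d := (g : Matrix (Fin 2) (Fin 2) ℤ_[p]) 1 1 with hd
  -- upper unipotent test: E1
  have hE1 : (p:ℤ_[p])^m ∣ (a^2 - (z:ℤ_[p])*c^2 - 1) := by
    apply dvd_of_norm
    rw [← psi_forall_iff ψ hψ1 hψ2]
    intro t
    set xm : Matrix.SpecialLinearGroup (Fin 2) ℤ_[p] :=
      ⟨!![1, (p:ℤ_[p])^r * t; 0, 1], by simp [Matrix.det_fin_two_of]⟩ with hxmdef
    have hxmem : xm ∈ slLevel p r := by
      intro i j
      fin_cases i <;> fin_cases j <;>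
        simp [hxmdef, Matrix.sub_apply, Matrix.one_apply, dvd_mul_right]
    have hK : Kterm z g xm = (a^2 - (z:ℤ_[p])*c^2 - 1) * ((p:ℤ_[p])^r * t) := by
      rw [Kterm]
      show _ * (!![1, (p:ℤ_[p])^r * t; 0, 1] 0 1) + _ * (!![1, (p:ℤ_[p])^r * t; 0, 1] 1 0)
          - _ * ((!![1, (p:ℤ_[p])^r * t; 0, 1] 0 0) - (!![1, (p:ℤ_[p])^r * t; 0, 1] 1 1)) = _
      simp; exact Or.inl rfl
    have := ψK xm hxmem
    rw [hK] at this
    rw [show y * ((a^2 - (z:ℤ_[p])*c^2 - 1 : ℤ_[p]) : ℚ_[p]) * (p:ℚ_[p])^r * (t : ℚ_[p])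
        = y * (((a^2 - (z:ℤ_[p])*c^2 - 1) * ((p:ℤ_[p])^r * t) : ℤ_[p]) : ℚ_[p]) by push_cast; ring]
    exact this
  -- lower unipotent test: E2
  have hE2 : (p:ℤ_[p])^m ∣ ((z:ℤ_[p])*d^2 - b^2 - (z:ℤ_[p])) := by
    apply dvd_of_norm
    rw [← psi_forall_iff ψ hψ1 hψ2]
    intro t
    set xm : Matrix.SpecialLinearGroup (Fin 2) ℤ_[p] :=
      ⟨!![1, 0; (p:ℤ_[p])^r * t, 1], by simp [Matrix.det_fin_two_of]⟩ with hxmdef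
    have hxmem : xm ∈ slLevel p r := by
      intro i j
      fin_cases i <;> fin_cases j <;>
        simp [hxmdef, Matrix.sub_apply, Matrix.one_apply, dvd_mul_right]
    have hK : Kterm z g xm = ((z:ℤ_[p])*d^2 - b^2 - (z:ℤ_[p])) * ((p:ℤ_[p])^r * t) := by
      rw [Kterm]
      show _ * (!![1, 0; (p:ℤ_[p])^r * t, 1] 0 1) + _ * (!![1, 0; (p:ℤ_[p])^r * t, 1] 1 0)
          - _ * ((!![1, 0; (p:ℤ_[p])^r * t, 1] 0 0) - (!![1, 0; (p:ℤ_[p])^r * t, 1] 1 1)) = _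
      simp; exact Or.inl rfl
    have := ψK xm hxmem
    rw [hK] at this
    rw [show y * (((z:ℤ_[p])*d^2 - b^2 - (z:ℤ_[p]) : ℤ_[p]) : ℚ_[p]) * (p:ℚ_[p])^r * (t : ℚ_[p])
        = y * ((((z:ℤ_[p])*d^2 - b^2 - (z:ℤ_[p])) * ((p:ℤ_[p])^r * t) : ℤ_[p]) : ℚ_[p]) by push_cast; ring]
    exact this
  -- diagonal test: E3
  have hE3 : (p:ℤ_[p])^m ∣ (a*b - (z:ℤ_[p])*c*d) := by
    rw [show a*b - (z:ℤ_[p])*c*d = -(((z:ℤ_[p])*c*d - a*b)) by ring]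
    rw [dvd_neg]
    apply dvd_of_norm
    rw [← psi_forall_iff ψ hψ1 hψ2]
    intro t
    obtain ⟨i2, hi2⟩ := (two_unit hp).exists_right_inv
    obtain ⟨v0, w0, hv0, hvw0⟩ := sqrt_lemma hp (t*t*(i2*i2)) (2*r) (by omega)
    set u : ℤ_[p] := (p:ℤ_[p])^r * t * i2 + v0 with hu
    have huu : u * (u - (p:ℤ_[p])^r * t) = 1 := by
      rw [hu]
      linear_combination hv0 + ((p:ℤ_[p])^(2*r)*t^2*i2 + (p:ℤ_[p])^r*t*v0) * hi2
    set xm : Matrix.SpecialLinearGroup (Fin 2) ℤ_[p] :=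
      ⟨!![u, 0; 0, u - (p:ℤ_[p])^r * t], by
        rw [Matrix.det_fin_two_of]; linear_combination huu⟩ with hxmdef
    have hxmem : xm ∈ slLevel p r := by
      intro i j
      fin_cases i <;> fin_cases j <;>
        simp only [hxmdef, Matrix.sub_apply, Matrix.one_apply_eq, Fin.zero_eta, Fin.mk_one,
          Matrix.one_apply_ne (by decide : (0:Fin 2) ≠ 1),
          Matrix.one_apply_ne (by decide : (1:Fin 2) ≠ 0), sub_zero,
          Matrix.cons_val', Matrix.cons_val_zero, Matrix.cons_val_one, Matrix.head_cons,
          Matrix.head_fin_const, Matrix.empty_val', Matrix.cons_val_fin_one, Matrix.of_apply]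
      · exact ⟨t * i2 + (p:ℤ_[p])^r * w0, by rw [hu]; linear_combination hvw0⟩
      · exact dvd_zero _
      · exact dvd_zero _
      · exact ⟨t * i2 + (p:ℤ_[p])^r * w0 - t, by rw [hu]; linear_combination hvw0⟩
    have hK : Kterm z g xm = ((z:ℤ_[p])*c*d - a*b) * ((p:ℤ_[p])^r * t) := by
      rw [Kterm]
      show _ * (!![u, 0; 0, u - (p:ℤ_[p])^r * t] 0 1) + _ * (!![u, 0; 0, u - (p:ℤ_[p])^r * t] 1 0)
          - _ * ((!![u, 0; 0, u - (p:ℤ_[p])^r * t] 0 0) - (!![u, 0; 0, u - (p:ℤ_[p])^r * t] 1 1)) = _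
      simp
      ring
    have := ψK xm hxmem
    rw [hK] at this
    rw [show y * (((z:ℤ_[p])*c*d - a*b : ℤ_[p]) : ℚ_[p]) * (p:ℚ_[p])^r * (t : ℚ_[p])
        = y * ((((z:ℤ_[p])*c*d - a*b) * ((p:ℤ_[p])^r * t) : ℤ_[p]) : ℚ_[p]) by push_cast; ring]
    exact this
  -- conclude the congruences
  have hz1 : (z:ℤ_[p]) * ((z⁻¹:ℤ_[p]ˣ):ℤ_[p]) = 1 := by
    rw [← Units.val_mul, mul_inv_cancel, Units.val_one]
  set zi : ℤ_[p] := ((z⁻¹:ℤ_[p]ˣ):ℤ_[p]) with hzi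
  constructor
  · have key : a - d = -(zi * (a * ((z:ℤ_[p])*d^2 - b^2 - (z:ℤ_[p])) + b * (a*b - (z:ℤ_[p])*c*d))) := by
      linear_combination (zi * (z:ℤ_[p]) * d) * hdet + (-(a - d)) * hz1
    rw [key, dvd_neg]
    exact ((dvd_add (hE2.mul_left a) (hE3.mul_left b)).mul_left zi)
  · have key : b - (z:ℤ_[p])*c = a * (a*b - (z:ℤ_[p])*c*d) - b * (a^2 - (z:ℤ_[p])*c^2 - 1) := by
      linear_combination ((z:ℤ_[p])*c) * hdet
    rw [key]
    exact dvd_sub (hE3.mul_left a) (hE1.mul_left b)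


end Aux

/-- with `n ≥ 1`, `r = ⌊(n+2)/2⌋`, `β = !![0, yz; y, 0]`, `v(y) = -n` exactly,
the stabilizer `{g ∈ SL₂(ℤ_p) : ψ_β(g·x·g⁻¹) = ψ_β(x) for all x ∈ SL₂^r(ℤ_p)}` equals
`T·SL₂^{n-r+1}(ℤ_p)`, where `T` is the embedded norm-one torus of matrices `!![u, vz; v, u]`,
`u² - z·v² = 1`. -/
theorem stmt5 (p : ℕ) [Fact p.Prime] (hp : p ≠ 2)
    (z : ℤ_[p]ˣ) (hz : ¬ ∃ w : ℤ_[p], w * w = (z : ℤ_[p]))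
    (ψ : AddChar ℚ_[p] ℂˣ)
    (hψ1 : ∀ t : ℤ_[p], ψ ((p : ℚ_[p]) * (t : ℚ_[p])) = 1)
    (hψ2 : ∃ t : ℤ_[p], ψ ((t : ℚ_[p])) ≠ 1)
    (n r : ℕ) (hn : 1 ≤ n) (hr : r = (n + 2) / 2)
    (y : ℚ_[p]) (hy : y ≠ 0) (hyv : y.valuation = -(n : ℤ)) :
    ∀ g : Matrix.SpecialLinearGroup (Fin 2) ℤ_[p],
      ((∀ x ∈ slLevel p r,
          psiBeta p ψ (betaMat p y z) (g * x * g⁻¹) = psiBeta p ψ (betaMat p y z) x) ↔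
        ∃ (u v : ℤ_[p]) (h : Matrix.SpecialLinearGroup (Fin 2) ℤ_[p]),
          u ^ 2 - (z : ℤ_[p]) * v ^ 2 = 1 ∧ h ∈ slLevel p (n - r + 1) ∧
          (g : Matrix (Fin 2) (Fin 2) ℤ_[p])
            = !![u, v * (z : ℤ_[p]); v, u] * (h : Matrix (Fin 2) (Fin 2) ℤ_[p])) := by
  intro g
  have hrle : r ≤ n := by omega
  have hr1 : 1 ≤ r := by omega
  have hm1 : 1 ≤ n - r + 1 := by omega
  have hrm : r + (n - r + 1) = n + 1 := by omega
  have hp0R : (0:ℝ) < p := by exact_mod_cast (Fact.out : p.Prime).pos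
  have hynorm : ‖y‖ = (p:ℝ)^(n:ℤ) := by
    rw [Padic.norm_eq_zpow_neg_valuation hy, hyv, neg_neg]
  have hY : ‖y * (p:ℚ_[p])^n‖ ≤ 1 := by
    rw [norm_mul, hynorm, Padic.norm_p_pow, ← zpow_add₀ (ne_of_gt hp0R)]
    have : (n:ℤ) + -(n:ℤ) = 0 := by ring
    rw [this, zpow_zero]
  constructor
  · intro hcond
    obtain ⟨hda, hbzc⟩ := cong_of_cond hp ψ hψ1 hψ2 z g n r (n - r + 1) hr1 hrle hrm y hy hynorm hcond
    exact lift_lemma hp z (n - r + 1) hm1 g hda hbzc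
  · intro hex
    obtain ⟨hda, hbzc⟩ := back_lemma z (n - r + 1) g hex
    exact cond_of_cong ψ hψ1 z g n r (n - r + 1) hrm y hY hda hbzc
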